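/- Let r > 0 and d > 2r. Then (1/π)·∫₀^π exp( −(d²/(4r²))·cos²θ ) dθ ≥ r/(2d). -/
import Mathlib

open Real

/-- for `d > 2r`, `(1/π)·∫₀^π exp(−(d²/(4r²))·cos²θ) dθ ≥ r/(2d)`. -/
theorem integral_exp_neg_cos_sq_ge_far (r d : ℝ) (hr : 0 < r) (hd : 2 * r < d) :
    r / (2 * d) ≤
      (1 / Real.pi) * ∫ θ in (0 : ℝ)..Real.pi, Real.exp (-(d ^ 2 / (4 * r ^ 2)) * Real.cos θ ^ 2) := by
  have hd0 : 0 < d := lt_trans (by linarith) hd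
  set f : ℝ → ℝ := fun θ => Real.exp (-(d ^ 2 / (4 * r ^ 2)) * Real.cos θ ^ 2) with hfdef
  have hf : Continuous f := by continuity
  set t : ℝ := Real.sqrt 2 * r / d with htdef
  have hs2 : (1:ℝ) < Real.sqrt 2 := by
    nlinarith [Real.sq_sqrt (by norm_num : (2:ℝ) ≥ 0), Real.sqrt_nonneg 2]
  have hs2' : Real.sqrt 2 < 1.5 := by
    nlinarith [Real.sq_sqrt (by norm_num : (2:ℝ) ≥ 0), Real.sqrt_nonneg 2]
  have ht0 : 0 < t := by positivity
  have hrd : r / d < 1 / 2 := by rw [div_lt_div_iff₀ hd0 (by norm_num)]; linarith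
  have htlt : t < Real.pi / 2 := by
    have : t = Real.sqrt 2 * (r / d) := by ring
    have hpi : 3 < Real.pi := Real.pi_gt_three
    nlinarith [Real.sqrt_nonneg 2]
  have hts : t ^ 2 = 2 * r ^ 2 / d ^ 2 := by
    rw [htdef, div_pow, mul_pow, Real.sq_sqrt (by norm_num : (2:ℝ) ≥ 0)]
  -- pointwise bound on the middle interval
  have hpt : ∀ θ ∈ Set.Icc (Real.pi / 2 - t) (Real.pi / 2 + t),
      Real.exp (-(1/2)) ≤ f θ := by
    intro θ hθ
    have hcos : |Real.cos θ| ≤ t := by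
      have : Real.cos θ = Real.sin (Real.pi / 2 - θ) := (Real.sin_pi_div_two_sub θ).symm
      rw [this]
      calc |Real.sin (Real.pi / 2 - θ)| ≤ |Real.pi / 2 - θ| := Real.abs_sin_le_abs
        _ ≤ t := by rw [abs_le]; constructor <;> [linarith [hθ.2]; linarith [hθ.1]]
    have hcos2 : Real.cos θ ^ 2 ≤ t ^ 2 := by
      have := sq_abs (Real.cos θ)
      nlinarith [abs_nonneg (Real.cos θ)]
    apply Real.exp_le_exp.2
    have : d ^ 2 / (4 * r ^ 2) * Real.cos θ ^ 2 ≤ d ^ 2 / (4 * r ^ 2) * t ^ 2 := by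
      apply mul_le_mul_of_nonneg_left hcos2 (by positivity)
    have heq : d ^ 2 / (4 * r ^ 2) * t ^ 2 = 1 / 2 := by
      rw [hts]; field_simp; ring
    linarith
  have hab : Real.pi / 2 - t ≤ Real.pi / 2 + t := by linarith
  have h0a : (0:ℝ) ≤ Real.pi / 2 - t := by linarith
  have hbpi : Real.pi / 2 + t ≤ Real.pi := by linarith
  have hint : ∀ a b : ℝ, IntervalIntegrable f MeasureTheory.volume a b :=
    fun a b => hf.intervalIntegrable a b
  have hmid : 2 * t * Real.exp (-(1/2)) ≤ ∫ θ in (Real.pi/2 - t)..(Real.pi/2 + t), f θ := by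
    have := intervalIntegral.integral_mono_on hab
      (intervalIntegrable_const (c := Real.exp (-(1/2)))) (hint _ _) hpt
    rw [intervalIntegral.integral_const, smul_eq_mul] at this
    calc 2 * t * Real.exp (-(1/2)) = (Real.pi/2 + t - (Real.pi/2 - t)) * Real.exp (-(1/2)) := by ring
      _ ≤ _ := this
  have hsplit : ∫ θ in (0:ℝ)..Real.pi, f θ =
      (∫ θ in (0:ℝ)..(Real.pi/2 - t), f θ) + (∫ θ in (Real.pi/2 - t)..(Real.pi/2 + t), f θ)
        + ∫ θ in (Real.pi/2 + t)..Real.pi, f θ := by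
    rw [intervalIntegral.integral_add_adjacent_intervals (hint _ _) (hint _ _),
        intervalIntegral.integral_add_adjacent_intervals (hint _ _) (hint _ _)]
  have hnn1 : 0 ≤ ∫ θ in (0:ℝ)..(Real.pi/2 - t), f θ :=
    intervalIntegral.integral_nonneg h0a (fun x _ => (Real.exp_pos _).le)
  have hnn2 : 0 ≤ ∫ θ in (Real.pi/2 + t)..Real.pi, f θ :=
    intervalIntegral.integral_nonneg hbpi (fun x _ => (Real.exp_pos _).le)
  have hI : 2 * t * Real.exp (-(1/2)) ≤ ∫ θ in (0:ℝ)..Real.pi, f θ := by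
    rw [hsplit]; linarith
  -- final numeric inequality
  have hpi0 : 0 < Real.pi := Real.pi_pos
  have hnum : r / (2 * d) ≤ (1 / Real.pi) * (2 * t * Real.exp (-(1/2))) := by
    rw [div_le_iff₀ (by positivity)]
    have h1 : (1 / Real.pi) * (2 * t * Real.exp (-(1/2))) * (2 * d)
        = 4 * Real.sqrt 2 * Real.exp (-(1/2)) * r / Real.pi := by
      rw [htdef]; field_simp; ring
    rw [h1, le_div_iff₀ hpi0]
    have he : Real.exp (-(1/2)) * Real.exp (-(1/2)) = Real.exp (-1) := by
      rw [← Real.exp_add]; norm_num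
    have he1 : Real.exp (-1) = 1 / Real.exp 1 := by
      rw [Real.exp_neg]; simp [Real.exp_ne_zero]
    have hexp : Real.exp 1 < 2.7182818286 := Real.exp_one_lt_d9
    have hexp0 : (0:ℝ) < Real.exp 1 := Real.exp_pos 1
    have hpilt : Real.pi < 3.15 := Real.pi_lt_d2
    -- need : r * π ≤ 4 √2 exp(-1/2) r ; i.e. π ≤ 4√2 e^{-1/2}; square: π² ≤ 32 e^{-1}
    have hexp2 : (0:ℝ) < Real.exp (-(1/2)) := Real.exp_pos _
    have hkey : Real.pi ≤ 4 * Real.sqrt 2 * Real.exp (-(1/2)) := by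
      have hsq : (4 * Real.sqrt 2 * Real.exp (-(1/2)))^2 = 32 / Real.exp 1 := by
        have h2 : Real.sqrt 2 ^ 2 = 2 := Real.sq_sqrt (by norm_num)
        have he2 : Real.exp (-(1/2)) ^ 2 = Real.exp (-1) := by rw [sq, he]
        rw [mul_pow, mul_pow, h2, he2, he1]; ring
      have hpisq : Real.pi ^ 2 * Real.exp 1 < 32 := by nlinarith
      have hpisq' : Real.pi ^ 2 < (4 * Real.sqrt 2 * Real.exp (-(1/2)))^2 := by
        rw [hsq, lt_div_iff₀ hexp0]; exact hpisq
      have hX : 0 ≤ 4 * Real.sqrt 2 * Real.exp (-(1/2)) := by positivity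
      exact (lt_of_pow_lt_pow_left₀ 2 hX hpisq').le
    have hfin : r * Real.pi ≤ 4 * Real.sqrt 2 * Real.exp (-(1/2)) * r := by
      calc r * Real.pi ≤ r * (4 * Real.sqrt 2 * Real.exp (-(1/2))) :=
            mul_le_mul_of_nonneg_left hkey hr.le
        _ = 4 * Real.sqrt 2 * Real.exp (-(1/2)) * r := by ring
    linarith
  calc r / (2 * d) ≤ (1 / Real.pi) * (2 * t * Real.exp (-(1/2))) := hnum
    _ ≤ (1 / Real.pi) * ∫ θ in (0:ℝ)..Real.pi, f θ := by
        apply mul_le_mul_of_nonneg_left hI (by positivity)
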